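/- The center of the smallest enclosing circle of a finite set of points S lies in the convex hull of S ∩ Σ, where Σ is the smallest enclosing circle; consequently, either two points of S on Σ are diametrically opposite, or at least three points of S lie on Σ. -/

import Mathlib

open Metric Finset RealInnerProductSpace

/-- The center of the smallest enclosing circle of a finite planar set `S` (with
at least two points) lies in the convex hull of the points of `S` on the circle;
consequently either two points of `S` on the circle are diametrically opposite,
or at least three points of `S` lie on the circle. -/
theorem smallest_enclosing_circle_center_in_hull
    (S : Finset (EuclideanSpace ℝ (Fin 2))) (hcard : 2 ≤ S.card)
    (c : EuclideanSpace ℝ (Fin 2)) (r : ℝ)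
    (hencl : (S : Set (EuclideanSpace ℝ (Fin 2))) ⊆ closedBall c r)
    (hmin : ∀ (c' : EuclideanSpace ℝ (Fin 2)) (r' : ℝ),
      (S : Set (EuclideanSpace ℝ (Fin 2))) ⊆ closedBall c' r' → r ≤ r') :
    c ∈ convexHull ℝ ((S : Set (EuclideanSpace ℝ (Fin 2))) ∩ sphere c r) ∧
      ((∃ p ∈ (S : Set (EuclideanSpace ℝ (Fin 2))) ∩ sphere c r,
          ∃ q ∈ (S : Set (EuclideanSpace ℝ (Fin 2))) ∩ sphere c r,
            p ≠ q ∧ c = midpoint ℝ p q) ∨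
        (∃ p ∈ (S : Set (EuclideanSpace ℝ (Fin 2))) ∩ sphere c r,
          ∃ q ∈ (S : Set (EuclideanSpace ℝ (Fin 2))) ∩ sphere c r,
            ∃ t ∈ (S : Set (EuclideanSpace ℝ (Fin 2))) ∩ sphere c r,
              p ≠ q ∧ q ≠ t ∧ p ≠ t)) := by
  classical
  have hSne : S.Nonempty := Finset.card_pos.mp (by omega)
  obtain ⟨p₀, hp₀, q₀, hq₀, hpq₀⟩ := Finset.one_lt_card.mp (by omega : 1 < S.card)
  have hr : 0 < r := by
    have h1 := hencl hp₀; have h2 := hencl hq₀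
    simp only [mem_closedBall] at h1 h2
    have hd : 0 < dist p₀ q₀ := dist_pos.mpr hpq₀
    nlinarith [dist_triangle p₀ c q₀, dist_comm c q₀, dist_comm q₀ c]
  set T : Finset (EuclideanSpace ℝ (Fin 2)) := S.filter (fun x => x ∈ sphere c r) with hT
  have hTset : (↑T : Set (EuclideanSpace ℝ (Fin 2))) = (S : Set (EuclideanSpace ℝ (Fin 2))) ∩ sphere c r := by
    ext x; simp [hT]
  have hmain : c ∈ convexHull ℝ ((↑T : Set (EuclideanSpace ℝ (Fin 2)))) := by
    by_contra hc
    obtain ⟨f, u, hfc, hfT⟩ := geometric_hahn_banach_point_closed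
      (convex_convexHull ℝ _) (T.finite_toSet.isClosed_convexHull (𝕜 := ℝ)) hc
    set v : EuclideanSpace ℝ (Fin 2) := (InnerProductSpace.toDual ℝ (EuclideanSpace ℝ (Fin 2))).symm f with hv
    have hfv : ∀ x : EuclideanSpace ℝ (Fin 2), ⟪v, x⟫ = f x := fun x => InnerProductSpace.toDual_symm_apply (y := f)
    have hd : ∀ x ∈ T, 0 < ⟪v, x - c⟫ := by
      intro x hx
      have h1 : u < f x := hfT _ (subset_convexHull ℝ _ hx)
      rw [inner_sub_right, hfv, hfv]; linarith
    set εf : EuclideanSpace ℝ (Fin 2) → ℝ := fun x =>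
      if x ∈ T then ⟪v, x - c⟫ / ‖v‖ ^ 2 else (r - dist x c) / (‖v‖ + 1) with hεf
    have hεpos : ∀ x ∈ S, 0 < εf x := by
      intro x hx
      by_cases hxT : x ∈ T
      · have h1 := hd x hxT
        have hv0 : v ≠ 0 := by
          intro h; rw [h, inner_zero_left] at h1; linarith
        have : 0 < ‖v‖ := norm_pos_iff.mpr hv0
        simp only [hεf, if_pos hxT]
        exact div_pos h1 (by positivity)
      · have h1 : dist x c ≤ r := hencl hx
        have h2 : dist x c ≠ r := by
          intro h; exact hxT (Finset.mem_filter.mpr ⟨hx, by simpa [mem_sphere, dist_eq_norm] using h⟩)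
        have h3 : dist x c < r := lt_of_le_of_ne h1 h2
        simp only [hεf, if_neg hxT]
        exact div_pos (by linarith) (by positivity)
    set ε : ℝ := S.inf' hSne εf with hε
    have hε0 : 0 < ε := (Finset.lt_inf'_iff hSne).mpr hεpos
    set c' : EuclideanSpace ℝ (Fin 2) := c + ε • v with hc'
    have hlt : ∀ x ∈ S, dist x c' < r := by
      intro x hx
      have hεle : ε ≤ εf x := Finset.inf'_le _ hx
      by_cases hxT : x ∈ T
      · have hdx : 0 < ⟪v, x - c⟫ := hd x hxT
        have hv0 : v ≠ 0 := by
          intro h; rw [h, inner_zero_left] at hdx; linarith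
        have hnv : 0 < ‖v‖ := norm_pos_iff.mpr hv0
        have hεle' : ε * ‖v‖ ^ 2 ≤ ⟪v, x - c⟫ := by
          rw [hεf] at hεle; simp only [if_pos hxT] at hεle
          rw [le_div_iff₀ (by positivity)] at hεle
          linarith
        have hxc : ‖x - c‖ = r := by
          have : x ∈ sphere c r := (Finset.mem_filter.mp hxT).2
          simpa [mem_sphere, dist_eq_norm] using this
        have hsq : dist x c' ^ 2 < r ^ 2 := by
          rw [dist_eq_norm, hc', show x - (c + ε • v) = (x - c) - ε • v by abel,
            norm_sub_sq_real, real_inner_smul_right, norm_smul, real_inner_comm,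
            Real.norm_of_nonneg hε0.le]
          have h2 : ‖ε • v‖ = ε * ‖v‖ := by rw [norm_smul, Real.norm_of_nonneg hε0.le]
          nlinarith [hdx, hε0, hεle', hxc, mul_le_mul_of_nonneg_left hεle' hε0.le]
        nlinarith [dist_nonneg (x := x) (y := c'), hr]
      · have h3 : dist x c < r := by
          have h1 : dist x c ≤ r := hencl hx
          refine lt_of_le_of_ne h1 fun h => hxT (Finset.mem_filter.mpr ⟨hx, by simpa [mem_sphere, dist_eq_norm] using h⟩)
        have hεle' : ε * (‖v‖ + 1) ≤ r - dist x c := by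
          rw [hεf] at hεle; simp only [if_neg hxT] at hεle
          rw [le_div_iff₀ (by positivity)] at hεle; linarith
        have htri : dist x c' ≤ dist x c + ε * ‖v‖ := by
          calc dist x c' ≤ dist x c + dist c c' := dist_triangle x c c'
          _ = dist x c + ε * ‖v‖ := by
              rw [hc', dist_self_add_right, norm_smul, Real.norm_of_nonneg hε0.le]
        nlinarith [norm_nonneg v]
    set r' : ℝ := S.sup' hSne (fun x => dist x c') with hr'
    have hsub : (S : Set (EuclideanSpace ℝ (Fin 2))) ⊆ closedBall c' r' := by
      intro x hx
      simp only [mem_closedBall]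
      exact Finset.le_sup' (fun y => dist y c') (Finset.mem_coe.mp hx)
    have h1 : r ≤ r' := hmin c' r' hsub
    have h2 : r' < r := (Finset.sup'_lt_iff hSne).mpr hlt
    linarith
  have hmem : ∀ y ∈ T, y ∈ (S : Set (EuclideanSpace ℝ (Fin 2))) ∩ sphere c r := by
    intro y hy; rw [← hTset]; exact Finset.mem_coe.mpr hy
  have hmain' : c ∈ convexHull ℝ ((S : Set (EuclideanSpace ℝ (Fin 2))) ∩ sphere c r) := by
    rw [← hTset]; exact hmain
  refine ⟨hmain', ?_⟩
  rcases lt_or_ge T.card 3 with h3 | h3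
  · have hT0 : T.card ≠ 0 := by
      intro h; rw [Finset.card_eq_zero] at h
      rw [h] at hmain; simp at hmain
    have hT1 : T.card ≠ 1 := by
      intro h
      obtain ⟨p, hp⟩ := Finset.card_eq_one.mp h
      have hpT : p ∈ T := by rw [hp]; simp
      rw [hp] at hmain
      simp only [Finset.coe_singleton, convexHull_singleton, Set.mem_singleton_iff] at hmain
      have h2 : dist p c = r := by simpa [mem_sphere, dist_eq_norm] using (Finset.mem_filter.mp hpT).2
      rw [← hmain, dist_self] at h2
      linarith
    have hc2 : T.card = 2 := by omega
    obtain ⟨p, q, hpq, hpqT⟩ := Finset.card_eq_two.mp hc2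
    have hpT : p ∈ T := by rw [hpqT]; simp
    have hqT : q ∈ T := by rw [hpqT]; simp
    left
    refine ⟨p, hmem p hpT, q, hmem q hqT, hpq, ?_⟩
    have hseg : c ∈ segment ℝ p q := by
      rw [← convexHull_pair]
      rw [hpqT] at hmain
      simpa using hmain
    obtain ⟨a, b, ha, hb, hab, habc⟩ := hseg
    have hdp : dist p c = r := by simpa [mem_sphere, dist_eq_norm] using (Finset.mem_filter.mp hpT).2
    have hdq : dist q c = r := by simpa [mem_sphere, dist_eq_norm] using (Finset.mem_filter.mp hqT).2
    have hcp : c - p = b • (q - p) := by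
      have ha' : a = 1 - b := by linarith
      rw [← habc, ha']; module
    have hcq : c - q = a • (p - q) := by
      have hb' : b = 1 - a := by linarith
      rw [← habc, hb']; module
    have h1 : b * ‖q - p‖ = r := by
      have h := congrArg norm hcp
      rw [norm_smul, Real.norm_of_nonneg hb] at h
      rw [← h, ← dist_eq_norm, dist_comm]
      exact hdp
    have h2 : a * ‖p - q‖ = r := by
      have h := congrArg norm hcq
      rw [norm_smul, Real.norm_of_nonneg ha] at h
      rw [← h, ← dist_eq_norm, dist_comm]
      exact hdq
    have hnorm : ‖p - q‖ = ‖q - p‖ := by rw [← neg_sub, norm_neg]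
    have hqp0 : 0 < ‖q - p‖ := by
      rw [norm_pos_iff, sub_ne_zero]; exact fun h => hpq h.symm
    have hab2 : a = b := by
      rw [hnorm] at h2
      have := h1.trans h2.symm
      exact (mul_right_cancel₀ (ne_of_gt hqp0) this).symm
    have ha12 : a = 1 / 2 := by linarith
    have hb12 : b = 1 / 2 := by linarith
    have hmid : midpoint ℝ p q = (1 / 2 : ℝ) • p + (1 / 2 : ℝ) • q := by
      rw [midpoint_eq_smul_add, invOf_eq_inv, smul_add]; norm_num
    rw [hmid, ← habc, ha12, hb12]
  · right
    obtain ⟨p, hp, q, hq, t, ht, hpq, hpt, hqt⟩ := Finset.two_lt_card.mp h3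
    exact ⟨p, hmem p hp, q, hmem q hq, t, hmem t ht, hpq, hqt, hpt⟩
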